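/- A string representation I(S) of the quiver Q_n associated to a graded string S with vertices v₁,...,v_k is indecomposable: its endomorphism ring (as a representation of the quiver with relations xy = yx = 0) contains no nontrivial idempotents. -/

import Mathlib

/-! Graded strings for the Gelfand–Ponomarev quiver `Q_n` and their string representations.
Vertices `v₀,…,v_k` (type `Fin (k+1)`); the arrow between `v_i` and `v_{i+1}` is recorded by
`a i : Bool` (`true` = rightward, `x(e_i) = e_{i+1}`; `false` = leftward, `y(e_{i+1}) = e_i`).
Labels obey `l(v_{i+1}) = π₁(l(v_i))` for right arrows and `l(v_{i+1}) = π₂(l(v_i))` for left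
arrows. -/

def p1 (n : ℕ) (i : Fin n) : Fin n :=
  if h : (i : ℕ) % 2 = 0 ∧ (i : ℕ) + 1 < n then ⟨(i : ℕ) + 1, h.2⟩
  else if (i : ℕ) % 2 = 1 then
    ⟨(i : ℕ) - 1, lt_of_le_of_lt (Nat.sub_le _ _) i.isLt⟩
  else i

def p2 (n : ℕ) (i : Fin n) : Fin n :=
  if h : (i : ℕ) % 2 = 1 ∧ (i : ℕ) + 1 < n then ⟨(i : ℕ) + 1, h.2⟩
  else if (i : ℕ) % 2 = 0 ∧ (i : ℕ) ≠ 0 then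
    ⟨(i : ℕ) - 1, lt_of_le_of_lt (Nat.sub_le _ _) i.isLt⟩
  else i

/-- The operator `x` of the string representation: `x(e_i) = e_{i+1}` for rightward arrows. -/
noncomputable def xopS (k : ℕ) (a : Fin k → Bool) : Module.End ℂ (Fin (k + 1) → ℂ) where
  toFun f := fun j =>
    if h : 0 < (j : ℕ) then
      (if a ⟨(j : ℕ) - 1, by have := j.isLt; omega⟩ = true then
        f ⟨(j : ℕ) - 1, by have := j.isLt; omega⟩ else 0)
    else 0
  map_add' f g := by
    funext j; (try simp only [Pi.add_apply]); split_ifs <;> simp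
  map_smul' c f := by
    funext j; (try simp only [Pi.smul_apply, smul_eq_mul, RingHom.id_apply]); split_ifs <;> simp

/-- The operator `y` of the string representation: `y(e_{i+1}) = e_i` for leftward arrows. -/
noncomputable def yopS (k : ℕ) (a : Fin k → Bool) : Module.End ℂ (Fin (k + 1) → ℂ) where
  toFun f := fun j =>
    if h : (j : ℕ) < k then
      (if a ⟨(j : ℕ), h⟩ = false then f ⟨(j : ℕ) + 1, by omega⟩ else 0)
    else 0
  map_add' f g := by
    funext j; by_cases h : (j : ℕ) < k <;> simp [h] <;> split <;> simp
  map_smul' c f := by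
    funext j; by_cases h : (j : ℕ) < k <;> simp [h] <;> split <;> simp


private lemma xopS_apply_succ {k : ℕ} (a : Fin k → Bool) (f : Fin (k+1) → ℂ)
    (i : Fin k) (hai : a i = true) : (xopS k a) f i.succ = f i.castSucc := by
  show (if h : 0 < ((i.succ : Fin (k+1)) : ℕ) then
      (if a ⟨((i.succ : Fin (k+1)) : ℕ) - 1, by have := (i.succ).isLt; omega⟩ = true then
        f ⟨((i.succ : Fin (k+1)) : ℕ) - 1, by have := (i.succ).isLt; omega⟩ else 0)
    else 0) = f i.castSucc
  rw [dif_pos (by simp)]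
  split
  · rfl
  · next h => exact absurd hai h

private lemma xopS_apply_zero {k : ℕ} (a : Fin k → Bool) (f : Fin (k+1) → ℂ) :
    (xopS k a) f (0 : Fin (k+1)) = 0 := by
  show (if h : 0 < (((0 : Fin (k+1))) : ℕ) then
      (if a ⟨(((0 : Fin (k+1))) : ℕ) - 1, by have := (0 : Fin (k+1)).isLt; omega⟩ = true then
        f ⟨(((0 : Fin (k+1))) : ℕ) - 1, by have := (0 : Fin (k+1)).isLt; omega⟩ else 0)
    else 0) = 0
  rw [dif_neg (by simp)]

private lemma yopS_apply_castSucc {k : ℕ} (a : Fin k → Bool) (f : Fin (k+1) → ℂ)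
    (i : Fin k) (hai : a i = false) : (yopS k a) f i.castSucc = f i.succ := by
  show (if h : ((i.castSucc : Fin (k+1)) : ℕ) < k then
      (if a ⟨((i.castSucc : Fin (k+1)) : ℕ), h⟩ = false then
        f ⟨((i.castSucc : Fin (k+1)) : ℕ) + 1, by omega⟩ else 0)
    else 0) = f i.succ
  rw [dif_pos (by simp [i.isLt])]
  split
  · rfl
  · next h => exact absurd hai h

private lemma xopS_single_eq {k : ℕ} (a : Fin k → Bool) (i : Fin k) (hai : a i = true) :
    (xopS k a) (Pi.single i.castSucc 1) = Pi.single i.succ (1 : ℂ) := by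
  funext j
  show (if h : 0 < (j : ℕ) then
      (if a ⟨(j : ℕ) - 1, by have := j.isLt; omega⟩ = true then
        (Pi.single i.castSucc (1 : ℂ) : Fin (k+1) → ℂ) ⟨(j : ℕ) - 1, by have := j.isLt; omega⟩ else 0)
    else 0) = (Pi.single i.succ (1 : ℂ) : Fin (k+1) → ℂ) j
  by_cases hje : (j : ℕ) = (i : ℕ) + 1
  · have hj : j = i.succ := by apply Fin.ext; simpa using hje
    subst hj
    rw [dif_pos (by simp)]
    split
    · have h1 : (⟨((i.succ : Fin (k+1)) : ℕ) - 1, by have := (i.succ).isLt; omega⟩ : Fin (k+1))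
          = i.castSucc := by apply Fin.ext; simp
      rw [h1, Pi.single_eq_same, Pi.single_eq_same]
    · next h => exact absurd hai h
  · have hr : (Pi.single i.succ (1 : ℂ) : Fin (k+1) → ℂ) j = 0 :=
      Pi.single_eq_of_ne (fun (hcon : j = i.succ) => hje (by rw [hcon]; simp)) 1
    rw [hr]
    rcases Nat.eq_zero_or_pos (j : ℕ) with h0 | h0
    · exact dif_neg (by omega)
    · rw [dif_pos h0]
      split
      · exact Pi.single_eq_of_ne (by simp [Fin.ext_iff]; omega) 1
      · rfl

private lemma yopS_single_eq {k : ℕ} (a : Fin k → Bool) (i : Fin k) (hai : a i = false) :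
    (yopS k a) (Pi.single i.succ 1) = Pi.single i.castSucc (1 : ℂ) := by
  funext j
  show (if h : (j : ℕ) < k then
      (if a ⟨(j : ℕ), h⟩ = false then
        (Pi.single i.succ (1 : ℂ) : Fin (k+1) → ℂ) ⟨(j : ℕ) + 1, by omega⟩ else 0)
    else 0) = (Pi.single i.castSucc (1 : ℂ) : Fin (k+1) → ℂ) j
  by_cases hje : (j : ℕ) = (i : ℕ)
  · have hj : j = i.castSucc := by apply Fin.ext; simpa using hje
    subst hj
    rw [dif_pos (by simp [i.isLt])]
    split
    · have h1 : (⟨((i.castSucc : Fin (k+1)) : ℕ) + 1, by omega⟩ : Fin (k+1))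
          = i.succ := by apply Fin.ext; simp
      rw [h1, Pi.single_eq_same, Pi.single_eq_same]
    · next h => exact absurd hai h
  · have hr : (Pi.single i.castSucc (1 : ℂ) : Fin (k+1) → ℂ) j = 0 :=
      Pi.single_eq_of_ne (fun (hcon : j = i.castSucc) => hje (by rw [hcon]; simp)) 1
    rw [hr]
    by_cases h0 : (j : ℕ) < k
    · rw [dif_pos h0]
      split
      · exact Pi.single_eq_of_ne (by simp [Fin.ext_iff]; omega) 1
      · rfl
    · exact dif_neg h0

private lemma yopS_single_zero {k : ℕ} (a : Fin k → Bool) :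
    (yopS k a) (Pi.single (0 : Fin (k+1)) 1) = 0 := by
  funext j
  show (if h : (j : ℕ) < k then
      (if a ⟨(j : ℕ), h⟩ = false then
        (Pi.single (0 : Fin (k+1)) (1 : ℂ) : Fin (k+1) → ℂ) ⟨(j : ℕ) + 1, by omega⟩ else 0)
    else 0) = (0 : Fin (k+1) → ℂ) j
  by_cases h0 : (j : ℕ) < k
  · rw [dif_pos h0]
    split
    · exact Pi.single_eq_of_ne (fun hc => by
        have := congrArg Fin.val hc; simp only [Fin.val_zero, Fin.val_mk] at this; omega) 1
    · rfl
  · exact dif_neg h0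

/-- A string representation `I(S)` of the quiver `Q_n` is indecomposable:
every idempotent endomorphism of the representation (a linear map commuting with `x` and `y`
and preserving the grading by labels) is `0` or the identity. -/
theorem string_representation_indecomposable
    (n k : ℕ) (l : Fin (k + 1) → Fin n) (a : Fin k → Bool)
    (hcompat : ∀ i : Fin k,
      l i.succ = if a i then p1 n (l i.castSucc) else p2 n (l i.castSucc)) :
    ∀ φ : Module.End ℂ (Fin (k + 1) → ℂ),
      φ * (xopS k a) = (xopS k a) * φ →
      φ * (yopS k a) = (yopS k a) * φ →
      (∀ m : Fin n, ∀ f : Fin (k + 1) → ℂ, (∀ j, l j ≠ m → f j = 0) →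
        ∀ j, l j ≠ m → φ f j = 0) →
      φ * φ = φ → φ = 0 ∨ φ = 1 := by
  intro phi hx hy _hgr hid
  have hx' : ∀ f, phi ((xopS k a) f) = (xopS k a) (phi f) := by
    intro f
    have h := LinearMap.congr_fun hx f
    simpa only [Module.End.mul_apply] using h
  have hy' : ∀ f, phi ((yopS k a) f) = (yopS k a) (phi f) := by
    intro f
    have h := LinearMap.congr_fun hy f
    simpa only [Module.End.mul_apply] using h
  have hid' : ∀ f, phi (phi f) = phi f := by
    intro f
    have h := LinearMap.congr_fun hid f
    simpa only [Module.End.mul_apply] using h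
  -- the diagonal matrix entries are all equal
  have hdiag : ∀ j : Fin (k + 1),
      phi (Pi.single j 1) j = phi (Pi.single (0 : Fin (k+1)) 1) (0 : Fin (k+1)) := by
    intro j
    induction j using Fin.induction with
    | zero => rfl
    | succ i ih =>
      cases hai : a i with
      | true =>
        have h1 := hx' (Pi.single i.castSucc 1)
        rw [xopS_single_eq a i hai] at h1
        have h2 := congrFun h1 i.succ
        rw [h2, xopS_apply_succ a _ i hai, ih]
      | false =>
        have h1 := hy' (Pi.single i.succ 1)
        rw [yopS_single_eq a i hai] at h1
        have h2 := congrFun h1 i.castSucc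
        rw [yopS_apply_castSucc a _ i hai] at h2
        rw [← h2, ih]
  -- vanishing of the relevant off-diagonal products
  have fact3 : ∀ i : Fin k, a i = true → phi (Pi.single i.succ 1) (0 : Fin (k+1)) = 0 := by
    intro i hai
    have h1 := hx' (Pi.single i.castSucc 1)
    rw [xopS_single_eq a i hai] at h1
    have h2 := congrFun h1 (0 : Fin (k+1))
    rw [h2, xopS_apply_zero]
  have fact4 : ∀ i : Fin k, a i = false →
      phi (Pi.single (0 : Fin (k+1)) 1) i.succ = 0 := by
    intro i hai
    have h1 := hy' (Pi.single (0 : Fin (k+1)) 1)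
    rw [yopS_single_zero] at h1
    have h2 := congrFun h1 i.castSucc
    rw [yopS_apply_castSucc a _ i hai] at h2
    rw [← h2, map_zero]
    rfl
  -- the idempotent relation at the (0,0) entry
  have hsum : phi (Pi.single (0 : Fin (k+1)) (1 : ℂ)) =
      ∑ jj : Fin (k+1), phi (Pi.single (0 : Fin (k+1)) 1) jj • (Pi.single jj (1 : ℂ) : Fin (k+1) → ℂ) := by
    conv_lhs => rw [← Finset.univ_sum_single (phi (Pi.single (0 : Fin (k+1)) (1 : ℂ)))]
    refine Finset.sum_congr rfl fun jj _ => ?_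
    rw [← Pi.single_smul, smul_eq_mul, mul_one]
  have key : phi (Pi.single (0 : Fin (k+1)) 1) (0 : Fin (k+1)) *
      phi (Pi.single (0 : Fin (k+1)) 1) (0 : Fin (k+1)) =
      phi (Pi.single (0 : Fin (k+1)) 1) (0 : Fin (k+1)) := by
    have h0 := hid' (Pi.single (0 : Fin (k+1)) (1 : ℂ))
    have h2 : phi (phi (Pi.single (0 : Fin (k+1)) (1 : ℂ))) (0 : Fin (k+1))
        = ∑ jj : Fin (k+1), phi (Pi.single (0 : Fin (k+1)) 1) jj *
            phi (Pi.single jj 1) (0 : Fin (k+1)) := by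
      conv_lhs => rw [hsum]
      rw [map_sum, Finset.sum_apply]
      refine Finset.sum_congr rfl fun jj _ => ?_
      rw [map_smul]
      simp [smul_eq_mul]
    have h3 : ∑ jj : Fin (k+1), phi (Pi.single (0 : Fin (k+1)) 1) jj *
            phi (Pi.single jj 1) (0 : Fin (k+1))
        = phi (Pi.single (0 : Fin (k+1)) 1) (0 : Fin (k+1)) *
          phi (Pi.single (0 : Fin (k+1)) 1) (0 : Fin (k+1)) := by
      rw [Finset.sum_eq_single (0 : Fin (k+1))]
      · intro jj _ hjj
        have hjpos : 0 < (jj : ℕ) :=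
          Nat.pos_of_ne_zero (fun h => hjj (by apply Fin.ext; simp [h]))
        have hjk : (jj : ℕ) - 1 < k := by have := jj.isLt; omega
        have hji : jj = (⟨(jj : ℕ) - 1, hjk⟩ : Fin k).succ := by
          apply Fin.ext; simp; omega
        cases hai : a (⟨(jj : ℕ) - 1, hjk⟩ : Fin k) with
        | true => rw [hji, fact3 _ hai, mul_zero]
        | false => rw [hji, fact4 _ hai, zero_mul]
      · intro h; exact absurd (Finset.mem_univ _) h
    rw [h0] at h2
    exact (h2.trans h3).symm
  -- trace computation
  have hproj : LinearMap.IsProj (LinearMap.range phi) phi :=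
    ⟨fun x => LinearMap.mem_range_self phi x, fun x hxm => by
      obtain ⟨u, rfl⟩ := hxm; exact hid' u⟩
  have htr2 := hproj.trace
  have htr : LinearMap.trace ℂ _ phi =
      ((k : ℂ) + 1) * phi (Pi.single (0 : Fin (k+1)) 1) (0 : Fin (k+1)) := by
    rw [LinearMap.trace_eq_matrix_trace ℂ (Pi.basisFun ℂ (Fin (k+1))) phi, Matrix.trace]
    have hdg : ∀ i : Fin (k+1), Matrix.diag
        (LinearMap.toMatrix (Pi.basisFun ℂ (Fin (k+1))) (Pi.basisFun ℂ (Fin (k+1))) phi) i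
        = phi (Pi.single (0 : Fin (k+1)) 1) (0 : Fin (k+1)) := by
      intro i
      rw [Matrix.diag_apply, LinearMap.toMatrix_apply, Pi.basisFun_apply, Pi.basisFun_repr,
        hdiag]
    rw [Finset.sum_congr rfl fun i _ => hdg i, Finset.sum_const, Finset.card_univ,
      Fintype.card_fin, nsmul_eq_mul]
    push_cast
    ring
  have hq : phi (Pi.single (0 : Fin (k+1)) 1) (0 : Fin (k+1)) = 0 ∨
      phi (Pi.single (0 : Fin (k+1)) 1) (0 : Fin (k+1)) = 1 := by
    have h4 : phi (Pi.single (0 : Fin (k+1)) 1) (0 : Fin (k+1)) *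
        (phi (Pi.single (0 : Fin (k+1)) 1) (0 : Fin (k+1)) - 1) = 0 := by
      linear_combination key
    rcases mul_eq_zero.mp h4 with h | h
    · exact Or.inl h
    · exact Or.inr (by linear_combination h)
  rcases hq with h | h
  · left
    have h5 : ((Module.finrank ℂ (LinearMap.range phi) : ℂ)) = 0 := by
      rw [← htr2, htr, h, mul_zero]
    have h6 : Module.finrank ℂ (LinearMap.range phi) = 0 := by exact_mod_cast h5
    rw [← LinearMap.range_eq_bot]
    exact Submodule.finrank_eq_zero.mp h6
  · right
    have h5 : ((Module.finrank ℂ (LinearMap.range phi) : ℂ)) = ((k + 1 : ℕ) : ℂ) := by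
      rw [← htr2, htr, h, mul_one]; push_cast; ring
    have h6 : Module.finrank ℂ (LinearMap.range phi) = k + 1 := by exact_mod_cast h5
    have h7 : LinearMap.range phi = ⊤ := by
      apply Submodule.eq_top_of_finrank_eq
      rw [h6, Module.finrank_fintype_fun_eq_card, Fintype.card_fin]
    have hsurj := LinearMap.range_eq_top.mp h7
    apply LinearMap.ext
    intro v
    obtain ⟨u, rfl⟩ := hsurj v
    rw [Module.End.one_apply]
    exact hid' u
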